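/- Let H be a real Hilbert space, r > 0, and x̄ ∈ H with ‖x̄‖ = r. If z ∈ H and z ≠ 0, then z ∉ D̂*P_{rB}(x̄)(0); consequently D̂*P_{rB}(x̄)(0) = {0}. -/

import Mathlib

open scoped RealInnerProductSpace
open Filter

variable {H : Type*} [NormedAddCommGroup H] [InnerProductSpace ℝ H]

/-- The metric projection onto the closed ball of radius `r` centered at the origin. -/
noncomputable def ballProj (r : ℝ) (u : H) : H :=
  if ‖u‖ ≤ r then u else (r / ‖u‖) • u

/-- The difference quotient appearing in the definition of the Mordukhovich (Fréchet)
coderivative of `ballProj r` at `xb`, evaluated at `x ∈ H` (candidate) and `y ∈ H`. -/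
noncomputable def coderivQuot (r : ℝ) (xb x y : H) (u : H) : ℝ :=
  (⟪x, u - xb⟫ - ⟪y, ballProj r u - ballProj r xb⟫) /
    (‖u - xb‖ + ‖ballProj r u - ballProj r xb‖)

lemma ballProj_lipschitz_aux (r : ℝ) (hr : 0 < r) (xb : H) (hxb : ‖xb‖ = r) (u : H) :
    ‖ballProj r u - ballProj r xb‖ ≤ 2 * ‖u - xb‖ := by
  have hproj_xb : ballProj r xb = xb := if_pos (le_of_eq hxb)
  rw [hproj_xb]
  by_cases h : ‖u‖ ≤ r
  · rw [ballProj, if_pos h]; linarith [norm_nonneg (u - xb)]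
  · push_neg at h
    have hu0 : 0 < ‖u‖ := lt_trans hr h
    have h1 : ‖ballProj r u - u‖ = ‖u‖ - r := by
      rw [ballProj, if_neg (not_le.mpr h)]
      have h2 : (r / ‖u‖) • u - u = (r / ‖u‖ - 1) • u := by
        rw [sub_smul, one_smul]
      rw [h2, norm_smul, Real.norm_eq_abs]
      have h3 : r / ‖u‖ - 1 < 0 := by
        rw [sub_neg, div_lt_one hu0]; exact h
      rw [abs_of_neg h3]
      field_simp
      ring
    have h4 : ‖ballProj r u - xb‖ ≤ ‖ballProj r u - u‖ + ‖u - xb‖ :=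
      norm_sub_le_norm_sub_add_norm_sub _ u _
    have h5 : ‖u‖ - r ≤ ‖u - xb‖ := by
      have := norm_sub_norm_le u xb
      rw [hxb] at this; linarith
    linarith

/-- Theorem 3.1(iii)(a) / Corollary 3.2(III)(a): for `‖xb‖ = r`, `D̂*P_{rB}(xb)(0) = {0}`. -/
theorem stmt11 (r : ℝ) (hr : 0 < r) (xb : H) (hxb : ‖xb‖ = r) :
    (∀ z : H, z ≠ 0 →
      ¬ Filter.limsup (coderivQuot r xb z (0 : H)) (nhdsWithin xb {xb}ᶜ) ≤ (0 : ℝ)) ∧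
    {z : H | Filter.limsup (coderivQuot r xb z (0 : H)) (nhdsWithin xb {xb}ᶜ) ≤ (0 : ℝ)}
      = {0} := by
  have hxbne : xb ≠ 0 := by
    intro h; rw [h, norm_zero] at hxb; exact absurd hxb.symm (ne_of_gt hr)
  haveI : Nontrivial H := nontrivial_of_ne xb 0 hxbne
  have key : ∀ z : H, z ≠ 0 →
      ¬ Filter.limsup (coderivQuot r xb z (0 : H)) (nhdsWithin xb {xb}ᶜ) ≤ (0 : ℝ) := by
    intro z hz hle
    have hz0 : 0 < ‖z‖ := norm_pos_iff.mpr hz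
    -- boundedness
    have hbdd : IsBoundedUnder (· ≤ ·) (nhdsWithin xb {xb}ᶜ)
        (coderivQuot r xb z (0 : H)) := by
      refine isBoundedUnder_of ⟨‖z‖, fun u => ?_⟩
      unfold coderivQuot
      set D := ‖u - xb‖ + ‖ballProj r u - ballProj r xb‖ with hD
      rcases eq_or_lt_of_le (by positivity : (0:ℝ) ≤ D) with hD0 | hD0
      · rw [← hD0, div_zero]; positivity
      · rw [div_le_iff₀ hD0]
        have h1 : ⟪z, u - xb⟫ ≤ ‖z‖ * ‖u - xb‖ := real_inner_le_norm z (u - xb)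
        have h2 : ‖u - xb‖ ≤ D := by
          rw [hD]; linarith [norm_nonneg (ballProj r u - ballProj r xb)]
        simp only [inner_zero_left, sub_zero]
        nlinarith
    -- frequently large
    have hfreq : ∃ᶠ u in nhdsWithin xb {xb}ᶜ, ‖z‖ / 3 ≤ coderivQuot r xb z (0 : H) u := by
      have hg : Tendsto (fun t : ℝ => xb + t • z) (nhdsWithin 0 (Set.Ioi 0))
          (nhdsWithin xb {xb}ᶜ) := by
        rw [tendsto_nhdsWithin_iff]
        constructor
        · have h0 : Tendsto (fun t : ℝ => xb + t • z) (nhds 0) (nhds (xb + (0:ℝ) • z)) := by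
            exact (continuous_const.add (continuous_id.smul continuous_const)).tendsto 0
          simpa using h0.mono_left nhdsWithin_le_nhds
        · filter_upwards [self_mem_nhdsWithin] with t ht
          simp only [Set.mem_compl_iff, Set.mem_singleton_iff]
          intro hEq
          have : t • z = 0 := by
            have := hEq
            rwa [add_eq_left] at this
          rcases smul_eq_zero.mp this with h | h
          · exact absurd h (ne_of_gt ht)
          · exact hz h
      refine hg.frequently (Filter.Eventually.frequently ?_)
      filter_upwards [self_mem_nhdsWithin] with t (ht : 0 < t)
      unfold coderivQuot
      have hsub : (xb + t • z) - xb = t • z := by abel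
      rw [hsub]
      have hnorm : ‖t • z‖ = t * ‖z‖ := by
        rw [norm_smul, Real.norm_eq_abs, abs_of_pos ht]
      have hnum : ⟪z, t • z⟫ = t * ‖z‖ ^ 2 := by
        rw [real_inner_smul_right, real_inner_self_eq_norm_sq]
      have hproj : ‖ballProj r (xb + t • z) - ballProj r xb‖ ≤ 2 * ‖(xb + t • z) - xb‖ :=
        ballProj_lipschitz_aux r hr xb hxb _
      rw [hsub] at hproj
      set D := ‖t • z‖ + ‖ballProj r (xb + t • z) - ballProj r xb‖ with hD
      have hDpos : 0 < D := by
        rw [hD, hnorm]; positivity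
      have hDle : D ≤ 3 * (t * ‖z‖) := by
        rw [hD, hnorm] at *
        nlinarith [hproj, hnorm]
      simp only [inner_zero_left, sub_zero, hnum]
      rw [le_div_iff₀ hDpos]
      nlinarith
    have := le_limsup_of_frequently_le hfreq hbdd
    nlinarith
  refine ⟨key, ?_⟩
  ext z
  simp only [Set.mem_setOf_eq, Set.mem_singleton_iff]
  constructor
  · intro h
    by_contra hz
    exact key z hz h
  · intro h
    subst h
    have hquot : coderivQuot r xb (0 : H) (0 : H) = fun _ => (0 : ℝ) := by
      funext u
      unfold coderivQuot
      simp
    rw [hquot]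
    haveI : (nhdsWithin xb {xb}ᶜ).NeBot := Module.punctured_nhds_neBot ℝ H xb
    simp [limsup_const]
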